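/- H-theorem for equilibrium flow: let x(t) solve the equilibrium flow ẋ = −S ∇Ψ*_x(Sᵀ(∇Φ(x) − ∇Φ(x̃))) in ℝ_{>0}^V. Then for all t, (d/dt) D[x(t)‖x̃] = −(Ψ*_{x(t)}(f(x(t))) + Ψ_{x(t)}(j(x(t)))) ≤ 0, where f(x) := Sᵀ(∇Φ(x) − ∇Φ(x̃)) and j(x) := ∇Ψ*_x(f(x)); the derivative vanishes at time t if and only if x(t) ∈ M^eq(x̃) := {x : Sᵀ(∇Φ(x) − ∇Φ(x̃)) = 0}. -/

import Mathlib

open Matrix Filter Set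

noncomputable def grad {n : ℕ} (F : (Fin n → ℝ) → ℝ) (x : Fin n → ℝ) : Fin n → ℝ :=
  fun i => fderiv ℝ F x (Pi.single i 1)

def IsDissipation {n : ℕ} (Ψ : (Fin n → ℝ) → ℝ) : Prop :=
  StrictConvexOn ℝ Set.univ Ψ ∧ ContDiff ℝ 1 Ψ ∧
  Tendsto (fun f => Ψ f / ‖f‖) (Bornology.cobounded (Fin n → ℝ)) atTop ∧
  (∀ f, Ψ (-f) = Ψ f) ∧ Ψ 0 = 0

noncomputable def legendre {n : ℕ} (Ψ : (Fin n → ℝ) → ℝ) (j : Fin n → ℝ) : ℝ :=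
  ⨆ f : Fin n → ℝ, (j ⬝ᵥ f - Ψ f)

noncomputable def breg {n : ℕ} (F : (Fin n → ℝ) → ℝ) (x x' : Fin n → ℝ) : ℝ :=
  F x - F x' - (x - x') ⬝ᵥ grad F x'

def posOrth (n : ℕ) : Set (Fin n → ℝ) := {x | ∀ i, 0 < x i}

def IsThermo {n : ℕ} (Φ : (Fin n → ℝ) → ℝ) : Prop :=
  StrictConvexOn ℝ (posOrth n) Φ ∧
  (∀ x ∈ posOrth n, DifferentiableAt ℝ Φ x) ∧
  Set.BijOn (grad Φ) (posOrth n) Set.univ ∧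
  (∀ xin ∈ posOrth n, ∀ xbd ∈ frontier {x : Fin n → ℝ | ∀ i, 0 ≤ x i},
    Tendsto (fun lam : ℝ => deriv (fun l : ℝ => Φ (l • xin + (1 - l) • xbd)) lam)
      (nhdsWithin 0 (Set.Ioi 0)) atBot)

lemma clm_dot {n : ℕ} (L : (Fin n → ℝ) →L[ℝ] ℝ) (v : Fin n → ℝ) :
    L v = v ⬝ᵥ (fun i => L (Pi.single i 1)) := by
  have hv : v = ∑ i, v i • (Pi.single i (1:ℝ) : Fin n → ℝ) := by
    funext j; simp [Finset.sum_apply, Pi.single_apply]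
  conv_lhs => rw [hv]
  simp [dotProduct, mul_comm]

lemma fderiv_dot {n : ℕ} {F : (Fin n → ℝ) → ℝ} (x v : Fin n → ℝ) :
    fderiv ℝ F x v = v ⬝ᵥ grad F x := clm_dot _ v

lemma grad_ineq {n : ℕ} {ψ : (Fin n → ℝ) → ℝ} (hc : ConvexOn ℝ Set.univ ψ)
    (hd : Differentiable ℝ ψ) (a b : Fin n → ℝ) :
    ψ a + (b - a) ⬝ᵥ grad ψ a ≤ ψ b := by
  set g : ℝ → ℝ := fun t => ψ (a + t • (b - a)) with hg
  have hgc : ConvexOn ℝ Set.univ g := by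
    have := hc.comp_affineMap (AffineMap.lineMap a b)
    have heq : g = ψ ∘ (AffineMap.lineMap a b) := by
      funext t
      simp only [g, Function.comp_apply, AffineMap.lineMap_apply_module]
      congr 1
      module
    rw [heq]; simpa using this
  have hline : HasDerivAt (fun t : ℝ => a + t • (b - a)) (b - a) 0 := by
    simpa using ((hasDerivAt_id (0:ℝ)).smul_const (b - a)).const_add a
  have h0 : a = a + (0:ℝ) • (b - a) := by simp
  have hgd : HasDerivAt g ((b - a) ⬝ᵥ grad ψ a) 0 := by
    have := (h0 ▸ (hd a).hasFDerivAt).comp_hasDerivAt 0 hline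
    have h2 : fderiv ℝ ψ (a + (0:ℝ) • (b-a)) (b - a) = (b - a) ⬝ᵥ grad ψ a := by
      rw [← h0]; exact fderiv_dot a (b - a)
    rw [h2] at this
    simpa only [g, Function.comp_def] using this
  have := hgc.le_slope_of_hasDerivAt (Set.mem_univ 0) (Set.mem_univ 1) one_pos hgd
  rw [slope_def_field] at this
  simp only [g, one_smul, zero_smul, add_zero] at this
  have hab : a + (b - a) = b := by module
  rw [hab] at this
  linarith

lemma legendre_grad {n : ℕ} {ψ : (Fin n → ℝ) → ℝ} (hc : ConvexOn ℝ Set.univ ψ)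
    (hd : Differentiable ℝ ψ) (f : Fin n → ℝ) :
    legendre ψ (grad ψ f) = f ⬝ᵥ grad ψ f - ψ f := by
  have hub : ∀ g, grad ψ f ⬝ᵥ g - ψ g ≤ f ⬝ᵥ grad ψ f - ψ f := by
    intro g
    have h1 := grad_ineq hc hd f g
    rw [sub_dotProduct] at h1
    rw [dotProduct_comm]
    linarith
  refine le_antisymm (ciSup_le hub) ?_
  have heq : grad ψ f ⬝ᵥ f - ψ f = f ⬝ᵥ grad ψ f - ψ f := by rw [dotProduct_comm]
  rw [← heq]
  exact le_ciSup ⟨f ⬝ᵥ grad ψ f - ψ f, by rintro y ⟨g, rfl⟩; exact hub g⟩ f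

lemma psi_pos {n : ℕ} {ψ : (Fin n → ℝ) → ℝ} (hsc : StrictConvexOn ℝ Set.univ ψ)
    (hsym : ∀ f, ψ (-f) = ψ f) (h0 : ψ 0 = 0) {f : Fin n → ℝ} (hf : f ≠ 0) :
    0 < ψ f := by
  have hne : f ≠ -f := by
    intro h
    apply hf
    have h2 : f + f = 0 := by nth_rewrite 2 [h]; simp
    funext i
    have := congrFun h2 i
    simp only [Pi.add_apply, Pi.zero_apply] at this ⊢
    linarith
  have := hsc.2 (Set.mem_univ f) (Set.mem_univ (-f)) hne
    (by norm_num : (0:ℝ) < 1/2) (by norm_num : (0:ℝ) < 1/2) (by norm_num)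
  have hmid : (1/2 : ℝ) • f + (1/2 : ℝ) • (-f) = 0 := by module
  rw [hmid, h0, hsym] at this
  simp only [smul_eq_mul] at this
  linarith


/-- H-theorem for the equilibrium flow: along a solution,
d/dt D[x(t)‖x̃] = −(Ψ*ₓ(f(x)) + Ψₓ(j(x))) ≤ 0, vanishing iff x(t) ∈ M^eq(x̃). -/
theorem h_theorem_for_equilibrium_flow {V E : ℕ}
    (S : Matrix (Fin V) (Fin E) ℝ)
    (Φ : (Fin V → ℝ) → ℝ) (hΦ : IsThermo Φ)
    (Ψstar : (Fin V → ℝ) → (Fin E → ℝ) → ℝ)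
    (hdiss : ∀ x ∈ posOrth V, IsDissipation (Ψstar x))
    (xtil : Fin V → ℝ) (hxtil : xtil ∈ posOrth V)
    (x : ℝ → Fin V → ℝ)
    (hpos : ∀ t : ℝ, x t ∈ posOrth V)
    (hflow : ∀ t : ℝ,
      HasDerivAt x
        (-(S *ᵥ grad (Ψstar (x t)) (Sᵀ *ᵥ (grad Φ (x t) - grad Φ xtil)))) t) :
    ∀ t : ℝ,
      HasDerivAt (fun s => breg Φ (x s) xtil)
        (-(Ψstar (x t) (Sᵀ *ᵥ (grad Φ (x t) - grad Φ xtil))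
          + legendre (Ψstar (x t))
              (grad (Ψstar (x t)) (Sᵀ *ᵥ (grad Φ (x t) - grad Φ xtil))))) t ∧
      -(Ψstar (x t) (Sᵀ *ᵥ (grad Φ (x t) - grad Φ xtil))
          + legendre (Ψstar (x t))
              (grad (Ψstar (x t)) (Sᵀ *ᵥ (grad Φ (x t) - grad Φ xtil)))) ≤ 0 ∧
      (-(Ψstar (x t) (Sᵀ *ᵥ (grad Φ (x t) - grad Φ xtil))
          + legendre (Ψstar (x t))
              (grad (Ψstar (x t)) (Sᵀ *ᵥ (grad Φ (x t) - grad Φ xtil)))) = 0 ↔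
        Sᵀ *ᵥ (grad Φ (x t) - grad Φ xtil) = 0) := by
  intro t
  obtain ⟨hsc, hcd, -, hsym, h0⟩ := hdiss (x t) (hpos t)
  set ψ := Ψstar (x t) with hψ
  set f : Fin E → ℝ := Sᵀ *ᵥ (grad Φ (x t) - grad Φ xtil) with hf
  set j : Fin E → ℝ := grad ψ f with hj
  set v : Fin V → ℝ := -(S *ᵥ j) with hv
  have hψc : ConvexOn ℝ Set.univ ψ := hsc.convexOn
  have hψd : Differentiable ℝ ψ := hcd.differentiable one_ne_zero
  -- Fenchel equality : legendre ψ j = f ⬝ᵥ j - ψ f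
  have hleg : legendre ψ j = f ⬝ᵥ j - ψ f := legendre_grad hψc hψd f
  -- the value equals -(f ⬝ᵥ j)
  have hval : -(ψ f + legendre ψ j) = -(f ⬝ᵥ j) := by rw [hleg]; ring
  -- f ⬝ᵥ j ≥ ψ f
  have hfj : ψ f ≤ f ⬝ᵥ j := by
    have := grad_ineq hψc hψd f 0
    rw [h0, zero_sub, neg_dotProduct] at this
    linarith
  have hψf : 0 ≤ ψ f := by
    rcases eq_or_ne f 0 with h | h
    · rw [h, h0]
    · exact le_of_lt (psi_pos hsc hsym h0 h)
  refine ⟨?_, ?_, ?_⟩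
  · -- derivative
    have hdx := hflow t
    have h1 : HasDerivAt (fun s => Φ (x s)) (v ⬝ᵥ grad Φ (x t)) t := by
      have := (hΦ.2.1 (x t) (hpos t)).hasFDerivAt.comp_hasDerivAt t hdx
      rw [fderiv_dot] at this
      simpa only [Function.comp_def] using this
    have h2 : HasDerivAt (fun s => (x s - xtil) ⬝ᵥ grad Φ xtil) (v ⬝ᵥ grad Φ xtil) t := by
      have hcoord : ∀ i, HasDerivAt (fun s => x s i) (v i) t := fun i =>
        ((ContinuousLinearMap.proj (R := ℝ) (φ := fun _ : Fin V => ℝ) i).hasFDerivAt.comp_hasDerivAt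
          t hdx)
      simp only [dotProduct, Pi.sub_apply]
      exact HasDerivAt.fun_sum fun i _ =>
        (((hcoord i).sub_const (xtil i)).mul_const (grad Φ xtil i))
    have h3 := (h1.sub_const (Φ xtil)).sub h2
    have hvv : v ⬝ᵥ grad Φ (x t) - v ⬝ᵥ grad Φ xtil = -(f ⬝ᵥ j) := by
      rw [← dotProduct_sub, hv, neg_dotProduct, hf, mulVec_transpose,
        dotProduct_comm, dotProduct_mulVec]
    rw [hvv] at h3
    rw [hval]
    exact h3
  · -- nonpositivity
    rw [hval]
    simp only [neg_nonpos]
    linarith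
  · -- equality iff
    rw [hval]
    constructor
    · intro h
      by_contra hne
      have := psi_pos hsc hsym h0 hne
      have : (0:ℝ) < f ⬝ᵥ j := lt_of_lt_of_le this hfj
      linarith [neg_eq_zero.mp h ▸ this]
    · intro h
      have hj0 : f ⬝ᵥ j = 0 := by rw [h, zero_dotProduct]
      rw [hj0, neg_zero]
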